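/- (Holonomy Theorem, left action) Let S be a finite semigroup generated by a finite alphabet A, T^1 = KR_right(S,A)^1, and (𝒞, [0,1]) the Chiswell rooted tree built from the Lyndon–Chiswell length function D. Then the map ε sending α ∈ T^1 to the function ε_α on the vertices of 𝒞 given by ε_α([k,β]) = [k,αβ] is well-defined (independent of representatives), each ε_α is an elliptic map of (𝒞,[0,1]) (it preserves the depth of every vertex and maps edges to edges), ε is a monoid homomorphism (ε_{αα'} = ε_α ∘ ε_{α'} and ε_1 = id), and ε is injective. Hence T^1 = KR^1_right(S,A) is faithfully represented as elliptic maps on a finite rooted tree. -/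

import Mathlib

open scoped Classical

namespace KRHolonomy

/-- Green's quasi-order `≤_J` on a monoid: `a ≤_J b` iff `a ∈ M b M`. -/
def leJ {M : Type*} [Monoid M] (a b : M) : Prop := ∃ x y : M, a = x * b * y

/-- `a <_J b` iff `a ≤_J b` and not `b ≤_J a`. -/
def ltJ {M : Type*} [Monoid M] (a b : M) : Prop := leJ a b ∧ ¬ leJ b a

/-- Green's quasi-order `≤_R` on a monoid: `a ≤_R b` iff `a ∈ b M`. -/
def leR {M : Type*} [Monoid M] (a b : M) : Prop := ∃ x : M, a = b * x

/-- `a <_R b` iff `a ≤_R b` and not `b ≤_R a`. -/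
def ltR {M : Type*} [Monoid M] (a b : M) : Prop := leR a b ∧ ¬ leR b a

/-- Green's quasi-order `≤_L` on a monoid: `a ≤_L b` iff `a ∈ M b`. -/
def leL {M : Type*} [Monoid M] (a b : M) : Prop := ∃ x : M, a = x * b

/-- `a <_L b` iff `a ≤_L b` and not `b ≤_L a`. -/
def ltL {M : Type*} [Monoid M] (a b : M) : Prop := leL a b ∧ ¬ leL b a

/-- The Dedekind height function: `height x` is the largest `k` such that there is a chain
`x₀ >_J x₁ >_J ⋯ >_J x_k = x`. -/
noncomputable def height {M : Type*} [Monoid M] (x : M) : ℕ :=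
  sSup {k | ∃ c : ℕ → M, c k = x ∧ ∀ i < k, ltJ (c (i + 1)) (c i)}

variable {A S : Type*} [Semigroup S]

/-- The edge `(s, a, s·θ(a))` of the right Cayley graph of `(S,A)` is a transition edge:
there is no path in the right Cayley graph from `s·θ(a)` back to `s`. -/
def IsTransitionEdge (θ : FreeMonoid A →* WithOne S) (s : WithOne S) (a : A) : Prop :=
  ¬ ∃ w : FreeMonoid A, s * θ (FreeMonoid.of a) * θ w = s

/-- The (ordered) sequence of transition edges along the path of the right Cayley graph
starting at `s` and reading the word `u`; an edge is recorded as a pair (source, label). -/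
noncomputable def transEdgesFrom (θ : FreeMonoid A →* WithOne S) :
    WithOne S → List A → List (WithOne S × A)
  | _, [] => []
  | s, a :: w =>
      (if IsTransitionEdge θ s a then [(s, a)] else []) ++
        transEdgesFrom θ (s * θ (FreeMonoid.of a)) w

/-- The sequence of transition edges of the path starting at `1` reading `u`. -/
noncomputable def transEdges (θ : FreeMonoid A →* WithOne S) (u : FreeMonoid A) :
    List (WithOne S × A) :=
  transEdgesFrom θ 1 (FreeMonoid.toList u)

/-- The congruence (`τ_r`, together with `(1,1)`) defining the right Karnofsky–Rhodes
expansion: two words of `A^*` represent the same element of `KR_right(S,A)¹` iff they are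
both empty or both nonempty, they have the same image in `S¹` and the same sequence of
transition edges. -/
def KRrel (θ : FreeMonoid A →* WithOne S) (u v : FreeMonoid A) : Prop :=
  (u = 1 ∧ v = 1) ∨
    (u ≠ 1 ∧ v ≠ 1 ∧ θ u = θ v ∧ transEdges θ u = transEdges θ v)

/-- Green's quasi-order `≤_J` on `T¹ = KR_right(S,A)¹`, expressed on word representatives:
`u ≤_J v` iff `u = p v q` holds in `T¹` for some `p, q ∈ T¹`. -/
def leJT (θ : FreeMonoid A →* WithOne S) (u v : FreeMonoid A) : Prop :=
  ∃ p q : FreeMonoid A, KRrel θ u (p * v * q)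

/-- `<_J` on `T¹ = KR_right(S,A)¹`, expressed on word representatives. -/
def ltJT (θ : FreeMonoid A →* WithOne S) (u v : FreeMonoid A) : Prop :=
  leJT θ u v ∧ ¬ leJT θ v u

/-- The Dedekind height function on `T¹ = KR_right(S,A)¹`, expressed on word
representatives: the largest `k` such that there is a chain
`t₀ >_J t₁ >_J ⋯ >_J t_k = t` in `T¹`. -/
noncomputable def heightT (θ : FreeMonoid A →* WithOne S) (u : FreeMonoid A) : ℕ :=
  sSup {k | ∃ c : ℕ → FreeMonoid A, KRrel θ (c k) u ∧ ∀ i < k, ltJT θ (c (i + 1)) (c i)}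

/-- `ℓ = 2 · max { h(s) : s ∈ S¹ }`. -/
noncomputable def ell (S : Type*) [Semigroup S] : ℕ :=
  2 * sSup (Set.range fun s : WithOne S => height s)

/-- `ξ(u,v)`: the largest `i` (with `0 ≤ i ≤ m`, `m` the number of transition edges of `u`)
such that the first `i` transition edges of `u` and of `v` agree. -/
noncomputable def xi (θ : FreeMonoid A →* WithOne S) (u v : FreeMonoid A) : ℕ :=
  sSup {i | i ≤ (transEdges θ u).length ∧
    (transEdges θ u).take i = (transEdges θ v).take i}

/-- The endpoint of an edge `(s, a)` of the right Cayley graph, namely `s·θ(a)`. -/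
def edgeEnd (θ : FreeMonoid A →* WithOne S) (e : WithOne S × A) : WithOne S :=
  e.1 * θ (FreeMonoid.of e.2)

/-- The Lyndon–Chiswell length function `D` on `T¹ = KR_right(S,A)¹`, expressed on word
representatives.  With `k = ξ(u,v)` (and indexing the transition edges from `1` as in the
paper, so that `E_k` sits at list index `k-1`):
`D(u,v) = ℓ` if `u = v` in `T¹`; `D(u,v) = 0` if `u ≠ v` in `T¹` and `k = 0`;
`D(u,v) = 2·h(end(E_k))` if `k > 0`, `E_{k+1}` and `E'_{k+1}` both exist and have the same
endpoint; and `D(u,v) = 2·h(end(E_k)) - 1` in all remaining cases. -/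
noncomputable def lcD (θ : FreeMonoid A →* WithOne S) (u v : FreeMonoid A) : ℕ :=
  if KRrel θ u v then ell S
  else if xi θ u v = 0 then 0
  else
    let k := xi θ u v
    let base := (transEdges θ u)[k - 1]?.elim 0 fun e => height (edgeEnd θ e)
    if ∃ e e', (transEdges θ u)[k]? = some e ∧ (transEdges θ v)[k]? = some e' ∧
        edgeEnd θ e = edgeEnd θ e'
    then 2 * base
    else 2 * base - 1

/-- The relation `∼` on `C = {(k,α) : 0 ≤ k ≤ ℓ, α ∈ T¹}`:
`(k,α) ∼ (k',β)` iff `k = k'` and `D(α,β) ≥ k`. -/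
def simRel (θ : FreeMonoid A →* WithOne S)
    (p q : {p : ℕ × FreeMonoid A // p.1 ≤ ell S}) : Prop :=
  p.val.1 = q.val.1 ∧ lcD θ p.val.2 q.val.2 ≥ p.val.1

/-- The vertex set of the Chiswell tree: `∼`-classes `[k,α]`. -/
def CVert (θ : FreeMonoid A →* WithOne S) : Type _ := Quot (simRel θ)

/-- The edge relation of the Chiswell graph: the edges are `[k,α] — [k+1,α]`
for `0 ≤ k < ℓ` and `α ∈ T¹`. -/
def edgeRel (θ : FreeMonoid A →* WithOne S) (v w : CVert θ) : Prop :=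
  ∃ (k : ℕ) (α : FreeMonoid A) (hk : k + 1 ≤ ell S),
    v = Quot.mk (simRel θ) ⟨(k, α), Nat.le_of_succ_le hk⟩ ∧
    w = Quot.mk (simRel θ) ⟨(k + 1, α), hk⟩

/-- The Chiswell graph `𝒞`. -/
def CGraph (θ : FreeMonoid A →* WithOne S) : SimpleGraph (CVert θ) :=
  SimpleGraph.fromRel (edgeRel θ)

/-- The depth function of the Chiswell tree: `δ([k,α]) = k`. -/
def depth (θ : FreeMonoid A →* WithOne S) : CVert θ → ℕ :=
  Quot.lift (fun p => p.val.1) (fun _ _ h => h.1)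

end KRHolonomy

namespace KRHolonomy
section FinMon
variable {M : Type*} [Monoid M]

theorem leJ_refl (a : M) : leJ a a := ⟨1, 1, by simp⟩
theorem leJ_trans {a b c : M} (h1 : leJ a b) (h2 : leJ b c) : leJ a c := by
  obtain ⟨x, y, rfl⟩ := h1; obtain ⟨x', y', rfl⟩ := h2
  exact ⟨x * x', y' * y, by simp [mul_assoc]⟩
theorem leR_leJ {a b : M} (h : leR a b) : leJ a b := by
  obtain ⟨x, rfl⟩ := h; exact ⟨1, x, by simp⟩
theorem leR_refl (a : M) : leR a a := ⟨1, by simp⟩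
theorem leR_trans {a b c : M} (h1 : leR a b) (h2 : leR b c) : leR a c := by
  obtain ⟨x, rfl⟩ := h1; obtain ⟨x', rfl⟩ := h2; exact ⟨x' * x, by simp [mul_assoc]⟩
theorem ltJ_trans {a b c : M} (h1 : ltJ a b) (h2 : ltJ b c) : ltJ a c := by
  refine ⟨leJ_trans h1.1 h2.1, fun h => h2.2 (leJ_trans h h1.1)⟩

variable [Finite M]

theorem exists_idem_pow (x : M) : ∃ N, 1 ≤ N ∧ x ^ N * x ^ N = x ^ N := by
  obtain ⟨m, n, hmn, h⟩ := Finite.exists_ne_map_eq_of_infinite (fun n : ℕ => x ^ (n + 1))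
  rcases Nat.lt_or_ge m n with hlt | hge
  · -- x^(m+1) = x^(n+1), d := n - m ≥ 1
    set d := n - m with hd
    have hd1 : 1 ≤ d := by omega
    have key : ∀ j, m + 1 ≤ j → x ^ j = x ^ (j + d) := by
      intro j hj
      have : x ^ j = x ^ (m + 1) * x ^ (j - (m + 1)) := by
        rw [← pow_add]; congr 1; omega
      rw [this, h]
      rw [← pow_add]; congr 1; omega
    have key2 : ∀ t j, m + 1 ≤ j → x ^ j = x ^ (j + t * d) := by
      intro t
      induction t with
      | zero => simp
      | succ t ih =>
        intro j hj
        rw [ih j hj, key (j + t * d) (by omega)]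
        congr 1; ring
    refine ⟨(m + 1) * d, by exact Nat.mul_pos (by omega) hd1, ?_⟩
    rw [← pow_add]
    exact (key2 (m + 1) ((m + 1) * d) (Nat.le_mul_of_pos_right _ hd1)).symm
  · set d := m - n with hd
    have hd1 : 1 ≤ d := by omega
    have key : ∀ j, n + 1 ≤ j → x ^ j = x ^ (j + d) := by
      intro j hj
      have : x ^ j = x ^ (n + 1) * x ^ (j - (n + 1)) := by
        rw [← pow_add]; congr 1; omega
      rw [this, ← h, ← pow_add]; congr 1; omega
    have key2 : ∀ t j, n + 1 ≤ j → x ^ j = x ^ (j + t * d) := by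
      intro t
      induction t with
      | zero => simp
      | succ t ih =>
        intro j hj
        rw [ih j hj, key (j + t * d) (by omega)]
        congr 1; ring
    refine ⟨(n + 1) * d, by exact Nat.mul_pos (by omega) hd1, ?_⟩
    rw [← pow_add]
    exact (key2 (n + 1) ((n + 1) * d) (Nat.le_mul_of_pos_right _ hd1)).symm

/-- Stability in a finite monoid. -/
theorem stab {a b : M} (h1 : leR a b) (h2 : leJ b a) : leR b a := by
  obtain ⟨u, rfl⟩ := h1
  obtain ⟨x, y, hb⟩ := h2
  have hiter : ∀ n : ℕ, b = x ^ n * b * (u * y) ^ n := by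
    intro n; induction n with
    | zero => simp
    | succ n ih =>
      calc b = x * (b * u) * y := hb
        _ = x * ((x ^ n * b * (u * y) ^ n) * u) * y := by rw [← ih]
        _ = x ^ (n+1) * b * (u * y) ^ (n+1) := by
            rw [pow_succ' x, pow_succ (u*y)]
            simp only [mul_assoc]
  obtain ⟨N, hN1, hNidem⟩ := exists_idem_pow x
  obtain ⟨N', rfl⟩ : ∃ N', N = N' + 1 := ⟨N - 1, by omega⟩
  set N := N' + 1 with hN
  have h3 : b = x ^ N * b * (u * y) ^ N := hiter N
  have h4 : x ^ N * b = b := by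
    conv_lhs => rw [h3]
    rw [show x ^ N * (x ^ N * b * (u*y)^N) = (x ^ N * x ^ N) * b * (u*y)^N by
      simp only [mul_assoc], hNidem, ← h3]
  have h5 : b = b * (u * y) ^ N := by
    conv_lhs => rw [h3]
    rw [h4]
  refine ⟨y * (u * y) ^ N', ?_⟩
  calc b = b * (u * y) ^ (N' + 1) := h5
    _ = b * u * (y * (u*y) ^ N') := by
        rw [pow_succ' (u*y)]
        simp only [mul_assoc]

def chainSet (x : M) : Set ℕ := {k | ∃ c : ℕ → M, c k = x ∧ ∀ i < k, ltJ (c (i + 1)) (c i)}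

theorem zero_mem_chainSet (x : M) : 0 ∈ chainSet x := ⟨fun _ => x, rfl, by omega⟩

theorem chainSet_lt_card {x : M} {k : ℕ} (hk : k ∈ chainSet x) : k < Nat.card M := by
  obtain ⟨c, hc, hchain⟩ := hk
  have hdesc : ∀ j, j ≤ k → ∀ i, i < j → ltJ (c j) (c i) := by
    intro j
    induction j with
    | zero => omega
    | succ j ih =>
      intro hj i hi
      rcases Nat.lt_or_ge i j with h' | h'
      · exact ltJ_trans (hchain j (by omega)) (ih (by omega) i h')
      · have : i = j := by omega
        subst this; exact hchain i (by omega)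
  have hinj : Function.Injective (fun i : Fin (k + 1) => c i) := by
    intro i j hij
    by_contra hne
    have hij' : c i.1 = c j.1 := hij
    rcases Nat.lt_or_ge i.1 j.1 with h' | h'
    · have := hdesc j.1 (by omega) i.1 h'
      rw [hij'] at this
      exact this.2 (leJ_refl _)
    · have h'' : j.1 < i.1 := by
        rcases Nat.lt_or_ge j.1 i.1 with h2 | h2
        · exact h2
        · exact absurd (Fin.ext (by omega)) hne
      have := hdesc i.1 (by omega) j.1 h''
      rw [hij'] at this
      exact this.2 (leJ_refl _)
  have := Nat.card_le_card_of_injective _ hinj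
  simpa using this

theorem chainSet_bddAbove (x : M) : BddAbove (chainSet x) :=
  ⟨Nat.card M, fun _ hk => le_of_lt (chainSet_lt_card hk)⟩

theorem height_mem (x : M) : height x ∈ chainSet x :=
  Nat.sSup_mem ⟨0, zero_mem_chainSet x⟩ (chainSet_bddAbove x)

theorem le_height {x : M} {k : ℕ} (hk : k ∈ chainSet x) : k ≤ height x :=
  le_csSup (chainSet_bddAbove x) hk

theorem height_lt_card (x : M) : height x < Nat.card M := chainSet_lt_card (height_mem x)

theorem height_mono {x y : M} (h : leJ x y) : height y ≤ height x := by
  obtain ⟨c, hc, hchain⟩ := height_mem y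
  set hy := height y with hhy
  refine le_height (x := x) ⟨fun i => if i = hy then x else c i, by simp, ?_⟩
  intro i hi
  beta_reduce
  rw [if_neg (show ¬ i = hy by omega)]
  by_cases h1 : i + 1 = hy
  · rw [if_pos h1]
    have h2 : ltJ (c hy) (c i) := by
      rw [← h1]; exact hchain i hi
    rw [hc] at h2
    exact ⟨leJ_trans h h2.1, fun hl => h2.2 (leJ_trans hl h)⟩
  · rw [if_neg h1]; exact hchain i hi

theorem height_strict {x y : M} (h : ltJ x y) : height y + 1 ≤ height x := by
  obtain ⟨c, hc, hchain⟩ := height_mem y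
  set hy := height y with hhy
  refine le_height (x := x) ⟨fun i => if i = hy + 1 then x else c i, by simp, ?_⟩
  intro i hi
  beta_reduce
  rw [if_neg (show ¬ i = hy + 1 by omega)]
  by_cases h1 : i + 1 = hy + 1
  · rw [if_pos h1]
    have : i = hy := by omega
    subst this; rw [hc]; exact h
  · rw [if_neg h1]; exact hchain i (by omega)

theorem heq_of_J {x y : M} (h1 : leJ x y) (h2 : leJ y x) : height x = height y :=
  le_antisymm (height_mono h2) (height_mono h1)

theorem cancel_of_unit {s : M} (h : ∃ x, s * x = 1) {c d : M} (h2 : s * c = s * d) : c = d := by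
  obtain ⟨x, hx⟩ := h
  have hsurj : Function.Surjective (fun m => s * m) := by
    intro m; exact ⟨x * m, by show s * (x * m) = m; rw [← mul_assoc, hx, one_mul]⟩
  exact (Finite.injective_iff_surjective.2 hsurj) h2

end FinMon
end KRHolonomy

section Part2
namespace KRHolonomy
open FreeMonoid

section WithOneFacts
variable {S : Type*} [Semigroup S]

theorem WithOne.mul_eq_one' {a b : WithOne S} (h : a * b = 1) : a = 1 ∧ b = 1 := by
  induction a using WithOne.recOneCoe with
  | one => constructor <;> simpa using h
  | coe x =>
    induction b using WithOne.recOneCoe with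
    | one => rw [mul_one] at h; exact absurd h WithOne.coe_ne_one
    | coe y => rw [← WithOne.coe_mul] at h; exact absurd h WithOne.coe_ne_one

theorem mul_ne_one_right {a b : WithOne S} (h : b ≠ 1) : a * b ≠ 1 :=
  fun hc => h (WithOne.mul_eq_one' hc).2

end WithOneFacts

section TransLemmas
variable {A S : Type*} [Semigroup S] (θ : FreeMonoid A →* WithOne S)

theorem TE_nil (t : WithOne S) : transEdgesFrom θ t [] = [] := rfl

theorem TE_cons (t : WithOne S) (a : A) (w : List A) :
    transEdgesFrom θ t (a :: w) =
      (if IsTransitionEdge θ t a then [(t, a)] else []) ++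
        transEdgesFrom θ (t * θ (FreeMonoid.of a)) w := rfl

theorem thetaL_cons (a : A) (w : List A) :
    θ (FreeMonoid.ofList (a :: w)) = θ (FreeMonoid.of a) * θ (FreeMonoid.ofList w) := by
  rw [← map_mul]; rfl

theorem thetaL_append (u v : List A) :
    θ (FreeMonoid.ofList (u ++ v)) = θ (FreeMonoid.ofList u) * θ (FreeMonoid.ofList v) := by
  rw [← map_mul, FreeMonoid.ofList_append]

theorem TE_append (u : List A) : ∀ (v : List A) (t : WithOne S),
    transEdgesFrom θ t (u ++ v) =
      transEdgesFrom θ t u ++ transEdgesFrom θ (t * θ (FreeMonoid.ofList u)) v := by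
  induction u with
  | nil => intro v t; simp [TE_nil]
  | cons a u ih =>
    intro v t
    rw [List.cons_append, TE_cons, TE_cons, ih, List.append_assoc]
    congr 2
    rw [thetaL_cons, ← mul_assoc]

theorem not_trans_mul {t : WithOne S} {a : A} (s : WithOne S)
    (h : ¬ IsTransitionEdge θ t a) : ¬ IsTransitionEdge θ (s * t) a := by
  simp only [IsTransitionEdge, not_not] at h ⊢
  obtain ⟨w, hw⟩ := h
  exact ⟨w, by rw [mul_assoc, mul_assoc, ← mul_assoc t, hw]⟩

/-- The filter function for shifting transition edges by left multiplication. -/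
noncomputable def fS (s : WithOne S) (e : WithOne S × A) : Option (WithOne S × A) :=
  if IsTransitionEdge θ (s * e.1) e.2 then some (s * e.1, e.2) else none

theorem TE_mul (w : List A) : ∀ (t s : WithOne S),
    transEdgesFrom θ (s * t) w = (transEdgesFrom θ t w).filterMap (fS θ s) := by
  induction w with
  | nil => intro t s; simp [TE_nil]
  | cons a w ih =>
    intro t s
    rw [TE_cons, TE_cons, List.filterMap_append]
    congr 1
    · by_cases h : IsTransitionEdge θ t a
      · rw [if_pos h]
        by_cases h2 : IsTransitionEdge θ (s * t) a
        · rw [if_pos h2]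
          simp [List.filterMap, fS, if_pos h2]
        · rw [if_neg h2]
          simp [List.filterMap, fS, if_neg h2]
      · rw [if_neg h, if_neg (not_trans_mul θ s h)]
        simp [List.filterMap]
    · rw [mul_assoc, ih]

theorem TE_nil_leR (w : List A) : ∀ t : WithOne S, transEdgesFrom θ t w = [] →
    ∃ x, t = t * θ (FreeMonoid.ofList w) * x := by
  induction w with
  | nil => intro t _; exact ⟨1, by simp⟩
  | cons a w ih =>
    intro t h
    rw [TE_cons] at h
    rcases List.append_eq_nil_iff.1 h with ⟨h1, h2⟩
    have hnt : ¬ IsTransitionEdge θ t a := by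
      intro hc; rw [if_pos hc] at h1; simp at h1
    simp only [IsTransitionEdge, not_not] at hnt
    obtain ⟨v, hv⟩ := hnt
    obtain ⟨x, hx⟩ := ih _ h2
    refine ⟨x * θ v, ?_⟩
    rw [thetaL_cons]
    calc t = t * θ (FreeMonoid.of a) * θ v := hv.symm
      _ = (t * θ (FreeMonoid.of a) * θ (FreeMonoid.ofList w) * x) * θ v := by rw [← hx]
      _ = t * (θ (FreeMonoid.of a) * θ (FreeMonoid.ofList w)) * (x * θ v) := by
          simp only [mul_assoc]

theorem TE_mem_trans (w : List A) : ∀ (t : WithOne S) (e : WithOne S × A),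
    e ∈ transEdgesFrom θ t w → IsTransitionEdge θ e.1 e.2 := by
  induction w with
  | nil => intro t e h; simp [TE_nil] at h
  | cons a w ih =>
    intro t e h
    rw [TE_cons] at h
    rcases List.mem_append.1 h with h | h
    · by_cases ht : IsTransitionEdge θ t a
      · rw [if_pos ht] at h
        simp at h
        subst h; exact ht
      · rw [if_neg ht] at h; simp at h
    · exact ih _ _ h

theorem TE_mem_leR (w : List A) : ∀ (t : WithOne S) (e : WithOne S × A),
    e ∈ transEdgesFrom θ t w → ∃ x, e.1 = t * x := by
  induction w with
  | nil => intro t e h; simp [TE_nil] at h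
  | cons a w ih =>
    intro t e h
    rw [TE_cons] at h
    rcases List.mem_append.1 h with h | h
    · by_cases ht : IsTransitionEdge θ t a
      · rw [if_pos ht] at h
        simp at h
        subst h; exact ⟨1, by simp⟩
      · rw [if_neg ht] at h; simp at h
    · obtain ⟨x, hx⟩ := ih _ _ h
      exact ⟨θ (FreeMonoid.of a) * x, by rw [hx, mul_assoc]⟩

theorem TE_split (w : List A) : ∀ (t : WithOne S) (k : ℕ),
    k ≤ (transEdgesFrom θ t w).length →
    ∃ u v, w = u ++ v ∧ transEdgesFrom θ t u = (transEdgesFrom θ t w).take k ∧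
      transEdgesFrom θ (t * θ (FreeMonoid.ofList u)) v = (transEdgesFrom θ t w).drop k := by
  induction w with
  | nil => intro t k hk
           refine ⟨[], [], by simp, by simp [TE_nil], by simp [TE_nil]⟩
  | cons a w ih =>
    intro t k hk
    by_cases ht : IsTransitionEdge θ t a
    · rcases k with _ | k
      · refine ⟨[], a :: w, by simp, by simp [TE_nil], by simp [TE_nil]⟩
      · rw [TE_cons, if_pos ht] at hk ⊢
        simp only [List.singleton_append, List.length_cons] at hk
        obtain ⟨u, v, hw, h1, h2⟩ := ih (t * θ (FreeMonoid.of a)) k (by omega)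
        refine ⟨a :: u, v, by rw [hw, List.cons_append], ?_, ?_⟩
        · rw [TE_cons, if_pos ht]
          simp only [List.singleton_append, List.take_succ_cons]
          rw [h1]
        · rw [thetaL_cons, ← mul_assoc, h2]
          simp
    · rw [TE_cons, if_neg ht, List.nil_append] at hk ⊢
      obtain ⟨u, v, hw, h1, h2⟩ := ih (t * θ (FreeMonoid.of a)) k hk
      refine ⟨a :: u, v, by rw [hw, List.cons_append], ?_, ?_⟩
      · rw [TE_cons, if_neg ht, List.nil_append, h1]
      · rw [thetaL_cons, ← mul_assoc, h2]

theorem TE_first (w : List A) : ∀ (t : WithOne S) (e : WithOne S × A) (L : List (WithOne S × A)),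
    transEdgesFrom θ t w = e :: L →
    ∃ p rest, w = p ++ e.2 :: rest ∧ transEdgesFrom θ t p = [] ∧
      e.1 = t * θ (FreeMonoid.ofList p) ∧ IsTransitionEdge θ e.1 e.2 := by
  induction w with
  | nil => intro t e L h; simp [TE_nil] at h
  | cons a w ih =>
    intro t e L h
    rw [TE_cons] at h
    by_cases ht : IsTransitionEdge θ t a
    · rw [if_pos ht, List.singleton_append] at h
      obtain ⟨he, -⟩ := List.cons.injEq .. ▸ h
      refine ⟨[], w, ?_, by simp [TE_nil], ?_, ?_⟩
      · simp [← he]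
      · simp [← he]
      · rw [← he]; exact ht
    · rw [if_neg ht, List.nil_append] at h
      obtain ⟨p, rest, hw, h1, h2, h3⟩ := ih _ _ _ h
      refine ⟨a :: p, rest, by rw [hw, List.cons_append], ?_, ?_, h3⟩
      · rw [TE_cons, if_neg ht, List.nil_append, h1]
      · rw [h2, thetaL_cons, ← mul_assoc]

theorem TE_getLast (w : List A) : ∀ (t : WithOne S) (e : WithOne S × A),
    (transEdgesFrom θ t w).getLast? = some e →
    (∃ x, t * θ (FreeMonoid.ofList w) = edgeEnd θ e * x) ∧
      (∃ x, edgeEnd θ e = (t * θ (FreeMonoid.ofList w)) * x) := by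
  induction w with
  | nil => intro t e h; simp [TE_nil] at h
  | cons a w ih =>
    intro t e h
    rw [TE_cons] at h
    by_cases h2 : transEdgesFrom θ (t * θ (FreeMonoid.of a)) w = []
    · rw [h2, List.append_nil] at h
      by_cases ht : IsTransitionEdge θ t a
      · rw [if_pos ht] at h
        simp only [List.getLast?_singleton, Option.some.injEq] at h
        subst h
        obtain ⟨x, hx⟩ := TE_nil_leR θ w _ h2
        constructor
        · refine ⟨θ (FreeMonoid.ofList w), ?_⟩
          rw [thetaL_cons, edgeEnd, ← mul_assoc]
        · refine ⟨x, ?_⟩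
          rw [edgeEnd]
          calc (t, a).1 * θ (FreeMonoid.of (t, a).2)
              = t * θ (FreeMonoid.of a) := rfl
            _ = t * θ (FreeMonoid.of a) * θ (FreeMonoid.ofList w) * x := hx
            _ = t * θ (FreeMonoid.ofList (a :: w)) * x := by
                rw [thetaL_cons, ← mul_assoc]
      · rw [if_neg ht] at h; simp at h
    · rw [List.getLast?_append, List.getLast?_eq_getElem?] at h
      have h3 : (transEdgesFrom θ (t * θ (FreeMonoid.of a)) w).getLast? = some e := by
        rw [List.getLast?_eq_getElem?]
        rcases h4 : (transEdgesFrom θ (t * θ (FreeMonoid.of a)) w)[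
          (transEdgesFrom θ (t * θ (FreeMonoid.of a)) w).length - 1]? with _ | e'
        · exfalso
          rw [List.getElem?_eq_none_iff] at h4
          have := List.length_pos_iff.2 h2
          omega
        · rw [h4] at h; simpa using h
      obtain ⟨⟨x, hx⟩, ⟨y, hy⟩⟩ := ih _ _ h3
      rw [thetaL_cons, ← mul_assoc]
      exact ⟨⟨x, hx⟩, ⟨y, hy⟩⟩

end TransLemmas
end KRHolonomy
end Part2
section Part3
namespace KRHolonomy
open FreeMonoid

section HGen
variable {A S : Type*} [Semigroup S] [Finite S] (θ : FreeMonoid A →* WithOne S)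

instance : Finite (WithOne S) := by
  have := Fintype.ofFinite S
  exact inferInstanceAs (Finite (Option S))

theorem surj_of_hgen (hgen : ∀ s : S, ∃ u : FreeMonoid A, θ u = (s : WithOne S)) :
    ∀ x : WithOne S, ∃ w : FreeMonoid A, θ w = x := by
  intro x
  induction x using WithOne.recOneCoe with
  | one => exact ⟨1, map_one θ⟩
  | coe s => exact hgen s

theorem trans_ltJ (hgen : ∀ s : S, ∃ u : FreeMonoid A, θ u = (s : WithOne S))
    {q : WithOne S} {a : A} (h : IsTransitionEdge θ q a) :
    ltJ (q * θ (FreeMonoid.of a)) q := by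
  constructor
  · exact leR_leJ ⟨θ (FreeMonoid.of a), rfl⟩
  · intro hc
    have := stab (a := q * θ (FreeMonoid.of a)) (b := q) ⟨θ (FreeMonoid.of a), rfl⟩ hc
    obtain ⟨x, hx⟩ := this
    obtain ⟨w, rfl⟩ := surj_of_hgen θ hgen x
    exact h ⟨w, hx.symm⟩

theorem TE_last_height {w : List A} {t : WithOne S} {e : WithOne S × A}
    (h : (transEdgesFrom θ t w).getLast? = some e) :
    height (edgeEnd θ e) = height (t * θ (FreeMonoid.ofList w)) := by
  obtain ⟨⟨x, hx⟩, ⟨y, hy⟩⟩ := TE_getLast θ w t e h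
  exact heq_of_J (leR_leJ ⟨y, hy⟩) (leR_leJ ⟨x, hx⟩)

theorem TE_take_getLast {w : List A} {t : WithOne S} {k : ℕ} {e : WithOne S × A}
    (h1 : (transEdgesFrom θ t w)[k]? = some e) :
    ((transEdgesFrom θ t w).take (k+1)).getLast? = some e := by
  have hk : k < (transEdgesFrom θ t w).length := (List.getElem?_eq_some_iff.1 h1).fst
  rw [List.getLast?_eq_getElem?, List.length_take]
  have hmin : min (k+1) (transEdgesFrom θ t w).length = k + 1 := by omega
  rw [hmin, List.getElem?_take, if_pos (by omega)]
  simpa using h1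

theorem TE_step (hgen : ∀ s : S, ∃ u : FreeMonoid A, θ u = (s : WithOne S))
    {w : List A} {t : WithOne S} {k : ℕ} {e e' : WithOne S × A}
    (h1 : (transEdgesFrom θ t w)[k]? = some e)
    (h2 : (transEdgesFrom θ t w)[k + 1]? = some e') :
    height (edgeEnd θ e) + 1 ≤ height (edgeEnd θ e') := by
  have hk1 : k + 1 < (transEdgesFrom θ t w).length := (List.getElem?_eq_some_iff.1 h2).fst
  obtain ⟨u, v, hw, hu, hv⟩ := TE_split θ w t (k + 1) (by omega)
  have hlast : (transEdgesFrom θ t u).getLast? = some e := by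
    rw [hu]; exact TE_take_getLast θ h1
  obtain ⟨⟨x, hx⟩, ⟨y, hy⟩⟩ := TE_getLast θ u t e hlast
  have hfirst : (transEdgesFrom θ (t * θ (FreeMonoid.ofList u)) v)[0]? = some e' := by
    rw [hv, List.getElem?_drop]
    simpa using h2
  rcases hTv : transEdgesFrom θ (t * θ (FreeMonoid.ofList u)) v with _ | ⟨e2, l'⟩
  · rw [hTv] at hfirst; simp at hfirst
  · have hfe : e2 = e' := by rw [hTv] at hfirst; simpa using hfirst
    rw [hfe] at hTv
    obtain ⟨p, rest, hvw, hp, hsrc, htrans⟩ := TE_first θ v _ _ _ hTv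
    have hlt : ltJ (edgeEnd θ e') e'.1 := trans_ltJ θ hgen htrans
    have hle : leJ e'.1 (edgeEnd θ e) := by
      rw [hsrc, hx]
      exact leR_leJ ⟨x * θ (FreeMonoid.ofList p), by simp [mul_assoc]⟩
    have hltJ : ltJ (edgeEnd θ e') (edgeEnd θ e) := by
      refine ⟨leJ_trans hlt.1 hle, fun hc => hlt.2 (leJ_trans hle hc)⟩
    exact height_strict hltJ

theorem TE_mono (hgen : ∀ s : S, ∃ u : FreeMonoid A, θ u = (s : WithOne S))
    {w : List A} {t : WithOne S} {k k' : ℕ} (hkk : k ≤ k')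
    {e e' : WithOne S × A}
    (h1 : (transEdgesFrom θ t w)[k]? = some e)
    (h2 : (transEdgesFrom θ t w)[k']? = some e') :
    height (edgeEnd θ e) ≤ height (edgeEnd θ e') := by
  induction k', hkk using Nat.le_induction generalizing e' with
  | base => rw [h1] at h2; simp at h2; rw [h2]
  | succ n hn ih =>
    have hn1 : n + 1 < (transEdgesFrom θ t w).length := (List.getElem?_eq_some_iff.1 h2).fst
    obtain ⟨em, hem⟩ : ∃ em, (transEdgesFrom θ t w)[n]? = some em :=
      ⟨(transEdgesFrom θ t w)[n]'(by omega), List.getElem?_eq_getElem (by omega)⟩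
    have h3 := ih hem
    have h4 := TE_step θ hgen hem h2
    omega

theorem fS_of_unit {s : WithOne S} (hs : ∃ x, s * x = 1) {e : WithOne S × A}
    (he : IsTransitionEdge θ e.1 e.2) : fS θ s e = some (s * e.1, e.2) := by
  rw [fS, if_pos]
  intro ⟨w, hw⟩
  refine he ⟨w, ?_⟩
  refine cancel_of_unit hs (c := e.1 * θ (FreeMonoid.of e.2) * θ w) (d := e.1) ?_
  rw [← hw]; simp [mul_assoc]

theorem filterMap_fS_of_unit {s : WithOne S} (hs : ∃ x, s * x = 1) :
    ∀ (l : List (WithOne S × A)), (∀ e ∈ l, IsTransitionEdge θ e.1 e.2) →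
    (l.filterMap (fS θ s)).length = l.length := by
  intro l
  induction l with
  | nil => intro _; simp
  | cons e l ih =>
    intro h
    rw [List.filterMap_cons, fS_of_unit θ hs (h e (by simp))]
    simp only [List.length_cons]
    rw [ih (fun e' he' => h e' (by simp [he']))]

end HGen
end KRHolonomy
end Part3
section Part4
namespace KRHolonomy
open FreeMonoid

section WordLevel
variable {A S : Type*} [Semigroup S] [Finite S] (θ : FreeMonoid A →* WithOne S)

theorem toList_eq_nil_iff {u : FreeMonoid A} : u.toList = [] ↔ u = 1 :=
  ⟨fun h => FreeMonoid.toList.injective (by simpa using h), fun h => by rw [h]; rfl⟩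

theorem of_ne_one (a : A) : FreeMonoid.of a ≠ 1 := by
  intro h
  simpa using congrArg FreeMonoid.toList h

theorem transEdges_mul (u v : FreeMonoid A) :
    transEdges θ (u * v) = transEdges θ u ++ transEdgesFrom θ (θ u) v.toList := by
  rw [transEdges, transEdges, FreeMonoid.toList_mul, TE_append]
  congr 2
  rw [one_mul, FreeMonoid.ofList_toList]

theorem TE_from_state (s : WithOne S) (v : FreeMonoid A) :
    transEdgesFrom θ s v.toList = (transEdges θ v).filterMap (fS θ s) := by
  have h := TE_mul θ v.toList 1 s
  rw [mul_one] at h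
  rw [h, transEdges]

theorem KRrel_refl (u : FreeMonoid A) : KRrel θ u u := by
  by_cases h : u = 1
  · exact Or.inl ⟨h, h⟩
  · exact Or.inr ⟨h, h, rfl, rfl⟩

theorem KRrel_symm {u v : FreeMonoid A} (h : KRrel θ u v) : KRrel θ v u := by
  rcases h with ⟨h1, h2⟩ | ⟨h1, h2, h3, h4⟩
  · exact Or.inl ⟨h2, h1⟩
  · exact Or.inr ⟨h2, h1, h3.symm, h4.symm⟩

theorem KRrel_trans {u v w : FreeMonoid A} (h : KRrel θ u v) (h' : KRrel θ v w) :
    KRrel θ u w := by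
  rcases h with ⟨h1, h2⟩ | ⟨h1, h2, h3, h4⟩
  · rcases h' with ⟨h1', h2'⟩ | ⟨h1', h2', h3', h4'⟩
    · exact Or.inl ⟨h1, h2'⟩
    · exact absurd h2 h1'
  · rcases h' with ⟨h1', h2'⟩ | ⟨h1', h2', h3', h4'⟩
    · exact absurd h1' h2
    · exact Or.inr ⟨h1, h2', h3.trans h3', h4.trans h4'⟩

theorem mul_ne_one_left {u v : FreeMonoid A} (h : u ≠ 1) : u * v ≠ 1 := by
  intro hc
  rw [← toList_eq_nil_iff, FreeMonoid.toList_mul, List.append_eq_nil_iff] at hc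
  exact h (toList_eq_nil_iff.1 hc.1)

theorem mul_ne_one_right' {u v : FreeMonoid A} (h : v ≠ 1) : u * v ≠ 1 := by
  intro hc
  rw [← toList_eq_nil_iff, FreeMonoid.toList_mul, List.append_eq_nil_iff] at hc
  exact h (toList_eq_nil_iff.1 hc.2)

theorem KRrel_mul_right {u v : FreeMonoid A} (h : KRrel θ u v) (w : FreeMonoid A) :
    KRrel θ (u * w) (v * w) := by
  rcases h with ⟨h1, h2⟩ | ⟨h1, h2, h3, h4⟩
  · subst h1; subst h2; exact KRrel_refl θ w
  · refine Or.inr ⟨mul_ne_one_left h1, mul_ne_one_left h2, by rw [map_mul, map_mul, h3], ?_⟩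
    rw [transEdges_mul, transEdges_mul, h3, h4]

theorem KRrel_mul_left {v w : FreeMonoid A} (h : KRrel θ v w) (u : FreeMonoid A) :
    KRrel θ (u * v) (u * w) := by
  rcases h with ⟨h1, h2⟩ | ⟨h1, h2, h3, h4⟩
  · subst h1; subst h2; exact KRrel_refl θ (u * 1)
  · refine Or.inr ⟨mul_ne_one_right' h1, mul_ne_one_right' h2,
      by rw [map_mul, map_mul, h3], ?_⟩
    rw [transEdges_mul, transEdges_mul, TE_from_state, TE_from_state, h4]

/-- The set whose supremum is `xi`. -/
def xiSet (u v : FreeMonoid A) : Set ℕ :=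
  {i | i ≤ (transEdges θ u).length ∧ (transEdges θ u).take i = (transEdges θ v).take i}

theorem xi_eq_sSup (u v : FreeMonoid A) : xi θ u v = sSup (xiSet θ u v) := rfl

theorem xiSet_zero (u v : FreeMonoid A) : 0 ∈ xiSet θ u v := ⟨Nat.zero_le _, by simp⟩

theorem xiSet_bdd (u v : FreeMonoid A) : BddAbove (xiSet θ u v) :=
  ⟨(transEdges θ u).length, fun _ h => h.1⟩

theorem xi_mem (u v : FreeMonoid A) : xi θ u v ∈ xiSet θ u v :=
  Nat.sSup_mem ⟨0, xiSet_zero θ u v⟩ (xiSet_bdd θ u v)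

theorem le_xi {u v : FreeMonoid A} {k : ℕ} (h : k ∈ xiSet θ u v) : k ≤ xi θ u v :=
  le_csSup (xiSet_bdd θ u v) h

theorem take_agree_mono {α : Type*} {L L' : List α} {i j : ℕ} (hij : i ≤ j)
    (h : L.take j = L'.take j) : L.take i = L'.take i := by
  have h2 := congrArg (List.take i) h
  rwa [List.take_take, List.take_take, inf_eq_left.2 hij] at h2

theorem getElem?_eq_of_take_agree {α : Type*} {L L' : List α} {i k : ℕ} (hik : i < k)
    (h : L.take k = L'.take k) : L[i]? = L'[i]? := by
  have h1 : (L.take k)[i]? = L[i]? := by rw [List.getElem?_take, if_pos hik]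
  have h2 : (L'.take k)[i]? = L'[i]? := by rw [List.getElem?_take, if_pos hik]
  rw [← h1, ← h2, h]

theorem bddAbove_height_range :
    BddAbove (Set.range (fun s : WithOne S => height s)) := by
  refine ⟨Nat.card (WithOne S), ?_⟩
  rintro _ ⟨x, rfl⟩
  exact le_of_lt (height_lt_card x)

theorem two_height_le_ell (x : WithOne S) : 2 * height x ≤ ell S := by
  have h := le_csSup (bddAbove_height_range (S := S)) ⟨x, rfl⟩
  show 2 * height x ≤ 2 * sSup (Set.range fun s : WithOne S => height s)
  exact Nat.mul_le_mul_left 2 h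

theorem one_le_height {x : WithOne S} (hx : x ≠ 1) : 1 ≤ height x := by
  refine le_height (x := x) ⟨fun i => if i = 0 then 1 else x, by simp, ?_⟩
  intro i hi
  have hi0 : i = 0 := by omega
  subst hi0
  beta_reduce
  rw [if_neg (by omega), if_pos rfl]
  constructor
  · exact ⟨1, x, by simp⟩
  · rintro ⟨p, q, hpq⟩
    have h1 := WithOne.mul_eq_one' hpq.symm
    have h2 := WithOne.mul_eq_one' h1.1
    exact hx h2.2

theorem edgeEnd_ne_one (hproper : ∀ u : FreeMonoid A, θ u = 1 → u = 1)
    (e : WithOne S × A) : edgeEnd θ e ≠ 1 := by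
  rw [edgeEnd]
  apply mul_ne_one_right
  intro h
  exact of_ne_one e.2 (hproper _ h)

theorem lcD_of_rel {u v : FreeMonoid A} (h : KRrel θ u v) : lcD θ u v = ell S := by
  unfold lcD; rw [if_pos h]

theorem lcD_of_xi0 {u v : FreeMonoid A} (h1 : ¬ KRrel θ u v) (h2 : xi θ u v = 0) :
    lcD θ u v = 0 := by
  unfold lcD; rw [if_neg h1, if_pos h2]

theorem lcD_eq {u v : FreeMonoid A} (h1 : ¬ KRrel θ u v) (h2 : xi θ u v ≠ 0) :
    lcD θ u v =
      if ∃ e e', (transEdges θ u)[xi θ u v]? = some e ∧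
          (transEdges θ v)[xi θ u v]? = some e' ∧ edgeEnd θ e = edgeEnd θ e'
      then 2 * ((transEdges θ u)[xi θ u v - 1]?.elim 0 fun e => height (edgeEnd θ e))
      else 2 * ((transEdges θ u)[xi θ u v - 1]?.elim 0 fun e => height (edgeEnd θ e)) - 1 := by
  unfold lcD; rw [if_neg h1, if_neg h2]

theorem lcD_le_ell (u v : FreeMonoid A) : lcD θ u v ≤ ell S := by
  by_cases h1 : KRrel θ u v
  · rw [lcD_of_rel θ h1]
  by_cases h2 : xi θ u v = 0
  · rw [lcD_of_xi0 θ h1 h2]; exact Nat.zero_le _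
  rw [lcD_eq θ h1 h2]
  have hbase : 2 * ((transEdges θ u)[xi θ u v - 1]?.elim 0 fun e => height (edgeEnd θ e))
      ≤ ell S := by
    rcases hE : (transEdges θ u)[xi θ u v - 1]? with _ | e
    · simp
    · simp only [Option.elim]
      exact two_height_le_ell (edgeEnd θ e)
  split_ifs
  · exact hbase
  · omega

theorem xi_symm (u v : FreeMonoid A) : xi θ u v = xi θ v u := by
  rw [xi_eq_sSup, xi_eq_sSup]
  congr 1
  ext i
  constructor
  · rintro ⟨hle, heq⟩
    refine ⟨?_, heq.symm⟩
    have h1 : (List.take i (transEdges θ u)).length = i := by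
      rw [List.length_take]; omega
    rw [heq, List.length_take] at h1
    omega
  · rintro ⟨hle, heq⟩
    refine ⟨?_, heq.symm⟩
    have h1 : (List.take i (transEdges θ v)).length = i := by
      rw [List.length_take]; omega
    rw [heq, List.length_take] at h1
    omega

theorem lcD_symm (u v : FreeMonoid A) : lcD θ u v = lcD θ v u := by
  by_cases h1 : KRrel θ u v
  · rw [lcD_of_rel θ h1, lcD_of_rel θ (KRrel_symm θ h1)]
  have h1' : ¬ KRrel θ v u := fun h => h1 (KRrel_symm θ h)
  by_cases h2 : xi θ u v = 0
  · rw [lcD_of_xi0 θ h1 h2, lcD_of_xi0 θ h1' (by rw [← xi_symm]; exact h2)]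
  have h2' : xi θ v u ≠ 0 := by rw [← xi_symm]; exact h2
  rw [lcD_eq θ h1 h2, lcD_eq θ h1' h2', ← xi_symm θ u v]
  obtain ⟨hlen, htake⟩ := xi_mem θ u v
  have hbase : (transEdges θ u)[xi θ u v - 1]? = (transEdges θ v)[xi θ u v - 1]? :=
    getElem?_eq_of_take_agree (by omega) htake
  rw [hbase]
  have hcond : (∃ e e', (transEdges θ u)[xi θ u v]? = some e ∧
      (transEdges θ v)[xi θ u v]? = some e' ∧ edgeEnd θ e = edgeEnd θ e') ↔
      (∃ e e', (transEdges θ v)[xi θ u v]? = some e ∧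
      (transEdges θ u)[xi θ u v]? = some e' ∧ edgeEnd θ e = edgeEnd θ e') := by
    constructor
    · rintro ⟨e, e', a, b, c⟩; exact ⟨e', e, b, a, c.symm⟩
    · rintro ⟨e, e', a, b, c⟩; exact ⟨e', e, b, a, c.symm⟩
  rw [if_congr hcond rfl rfl]

end WordLevel
end KRHolonomy
end Part4
section Part5
namespace KRHolonomy
open FreeMonoid

section P5
variable {A S : Type*} [Semigroup S] [Finite S] (θ : FreeMonoid A →* WithOne S)

/-- The `base` quantity in the definition of `lcD`. -/
noncomputable def lcBase (u v : FreeMonoid A) : ℕ :=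
  (transEdges θ u)[xi θ u v - 1]?.elim 0 fun e => height (edgeEnd θ e)

theorem lcD_eq' {u v : FreeMonoid A} (h1 : ¬ KRrel θ u v) (h2 : xi θ u v ≠ 0) :
    lcD θ u v =
      if ∃ e e', (transEdges θ u)[xi θ u v]? = some e ∧
          (transEdges θ v)[xi θ u v]? = some e' ∧ edgeEnd θ e = edgeEnd θ e'
      then 2 * lcBase θ u v
      else 2 * lcBase θ u v - 1 :=
  lcD_eq θ h1 h2

theorem lcD_then {u v : FreeMonoid A} (h1 : ¬ KRrel θ u v) (h2 : xi θ u v ≠ 0)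
    (hc : ∃ e e', (transEdges θ u)[xi θ u v]? = some e ∧
      (transEdges θ v)[xi θ u v]? = some e' ∧ edgeEnd θ e = edgeEnd θ e') :
    lcD θ u v = 2 * lcBase θ u v := by
  rw [lcD_eq' θ h1 h2, if_pos hc]

theorem lcD_else {u v : FreeMonoid A} (h1 : ¬ KRrel θ u v) (h2 : xi θ u v ≠ 0)
    (hc : ¬ ∃ e e', (transEdges θ u)[xi θ u v]? = some e ∧
      (transEdges θ v)[xi θ u v]? = some e' ∧ edgeEnd θ e = edgeEnd θ e') :
    lcD θ u v = 2 * lcBase θ u v - 1 := by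
  rw [lcD_eq' θ h1 h2, if_neg hc]

theorem lcD_ge_pred {u v : FreeMonoid A} (h1 : ¬ KRrel θ u v) (h2 : xi θ u v ≠ 0) :
    2 * lcBase θ u v - 1 ≤ lcD θ u v := by
  rw [lcD_eq' θ h1 h2]; split_ifs <;> omega

theorem lcD_le_two_base {u v : FreeMonoid A} (h1 : ¬ KRrel θ u v) (h2 : xi θ u v ≠ 0) :
    lcD θ u v ≤ 2 * lcBase θ u v := by
  rw [lcD_eq' θ h1 h2]; split_ifs <;> omega

theorem length_le_of_take_agree {α : Type*} {L L' : List α} {i : ℕ}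
    (h1 : i ≤ L.length) (h2 : L.take i = L'.take i) : i ≤ L'.length := by
  have hl : (L.take i).length = i := by rw [List.length_take]; omega
  rw [h2, List.length_take] at hl
  omega

theorem xi_pos_getElem {u v : FreeMonoid A} (h2 : xi θ u v ≠ 0) :
    ∃ e, (transEdges θ u)[xi θ u v - 1]? = some e ∧
      (transEdges θ v)[xi θ u v - 1]? = some e ∧ lcBase θ u v = height (edgeEnd θ e) := by
  obtain ⟨hlen, htake⟩ := xi_mem θ u v
  have hlt : xi θ u v - 1 < (transEdges θ u).length := by omega
  refine ⟨(transEdges θ u)[xi θ u v - 1], List.getElem?_eq_getElem hlt, ?_, ?_⟩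
  · rw [← getElem?_eq_of_take_agree (by omega) htake]
    exact List.getElem?_eq_getElem hlt
  · rw [lcBase, List.getElem?_eq_getElem hlt]
    rfl

theorem lcD_lt_ell (hproper : ∀ u : FreeMonoid A, θ u = 1 → u = 1)
    (hgen : ∀ s : S, ∃ u : FreeMonoid A, θ u = (s : WithOne S))
    {u v : FreeMonoid A} (h : ¬ KRrel θ u v) : lcD θ u v < ell S := by
  have hne : u ≠ 1 ∨ v ≠ 1 := by
    by_contra hc
    push_neg at hc
    exact h (Or.inl ⟨hc.1, hc.2⟩)
  -- extract a letter
  obtain ⟨a⟩ : Nonempty A := by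
    rcases hne with hne | hne
    · rcases hl : u.toList with _ | ⟨a, l⟩
      · exact absurd (toList_eq_nil_iff.1 hl) hne
      · exact ⟨a⟩
    · rcases hl : v.toList with _ | ⟨a, l⟩
      · exact absurd (toList_eq_nil_iff.1 hl) hne
      · exact ⟨a⟩
  have hx1 : θ (FreeMonoid.of a) ≠ 1 := fun hh => of_ne_one a (hproper _ hh)
  set H := sSup (Set.range fun s : WithOne S => height s) with hH
  have hellH : ell S = 2 * H := rfl
  have hH1 : 1 ≤ H := le_trans (one_le_height hx1)
    (le_csSup (bddAbove_height_range (S := S)) ⟨_, rfl⟩)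
  by_cases h2 : xi θ u v = 0
  · rw [lcD_of_xi0 θ h h2]; omega
  obtain ⟨e0, hE0, hE0', hbase⟩ := xi_pos_getElem θ h2
  have hb1 : 1 ≤ lcBase θ u v := by
    rw [hbase]; exact one_le_height (edgeEnd_ne_one θ hproper e0)
  have hbH : lcBase θ u v ≤ H := by
    rw [hbase]; exact le_csSup (bddAbove_height_range (S := S)) ⟨_, rfl⟩
  rw [lcD_eq' θ h h2]
  split_ifs with hc
  · obtain ⟨e1, e1', hE1, hE1', hend⟩ := hc
    have hstep : height (edgeEnd θ e0) + 1 ≤ height (edgeEnd θ e1) := by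
      have h0 : (transEdgesFrom θ 1 u.toList)[xi θ u v - 1]? = some e0 := hE0
      have h1 : (transEdgesFrom θ 1 u.toList)[(xi θ u v - 1) + 1]? = some e1 := by
        have : (xi θ u v - 1) + 1 = xi θ u v := by omega
        rw [this]; exact hE1
      exact TE_step θ hgen h0 h1
    have h1H : height (edgeEnd θ e1) ≤ H :=
      le_csSup (bddAbove_height_range (S := S)) ⟨_, rfl⟩
    rw [hbase]
    omega
  · omega

end P5
end KRHolonomy
end Part5
section Part6
namespace KRHolonomy
open FreeMonoid

section P6
variable {A S : Type*} [Semigroup S] [Finite S] (θ : FreeMonoid A →* WithOne S)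

theorem lcD_congr_left {u v : FreeMonoid A} (huv : KRrel θ u v) (w : FreeMonoid A) :
    lcD θ u w = lcD θ v w := by
  rcases h' : huv with ⟨h1, h2⟩ | ⟨h1, h2, h3, h4⟩
  · rw [h1, h2]
  · have hKR : KRrel θ u w ↔ KRrel θ v w :=
      ⟨fun h => KRrel_trans θ (KRrel_symm θ huv) h, fun h => KRrel_trans θ huv h⟩
    have hxi : xi θ u w = xi θ v w := by
      rw [xi_eq_sSup, xi_eq_sSup]
      unfold xiSet
      rw [h4]
    by_cases hc : KRrel θ u w
    · rw [lcD_of_rel θ hc, lcD_of_rel θ (hKR.1 hc)]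
    · have hc' : ¬ KRrel θ v w := fun hh => hc (hKR.2 hh)
      by_cases hz : xi θ u w = 0
      · rw [lcD_of_xi0 θ hc hz, lcD_of_xi0 θ hc' (by rw [← hxi]; exact hz)]
      · rw [lcD_eq θ hc hz, lcD_eq θ hc' (by rw [← hxi]; exact hz), ← hxi, h4]

theorem lcD_congr_right {u v w : FreeMonoid A} (hvw : KRrel θ v w) :
    lcD θ u v = lcD θ u w := by
  rcases h' : hvw with ⟨h1, h2⟩ | ⟨h1, h2, h3, h4⟩
  · rw [h1, h2]
  · have hKR : KRrel θ u v ↔ KRrel θ u w :=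
      ⟨fun h => KRrel_trans θ h hvw, fun h => KRrel_trans θ h (KRrel_symm θ hvw)⟩
    have hxi : xi θ u v = xi θ u w := by
      rw [xi_eq_sSup, xi_eq_sSup]
      unfold xiSet
      rw [h4]
    by_cases hc : KRrel θ u v
    · rw [lcD_of_rel θ hc, lcD_of_rel θ (hKR.1 hc)]
    · have hc' : ¬ KRrel θ u w := fun hh => hc (hKR.2 hh)
      by_cases hz : xi θ u v = 0
      · rw [lcD_of_xi0 θ hc hz, lcD_of_xi0 θ hc' (by rw [← hxi]; exact hz)]
      · rw [lcD_eq θ hc hz, lcD_eq θ hc' (by rw [← hxi]; exact hz), ← hxi, h4]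

theorem lcD_ultra_aux (hgen : ∀ s : S, ∃ u : FreeMonoid A, θ u = (s : WithOne S))
    {u v w : FreeMonoid A} (huv : ¬ KRrel θ u v) (hvw : ¬ KRrel θ v w)
    (huw : ¬ KRrel θ u w) (hle : xi θ u v ≤ xi θ v w) :
    min (lcD θ u v) (lcD θ v w) ≤ lcD θ u w := by
  obtain ⟨hk1len, hk1take⟩ := xi_mem θ u v
  obtain ⟨hk2len, hk2take⟩ := xi_mem θ v w
  obtain ⟨hk3len, hk3take⟩ := xi_mem θ u w
  have hmin : xi θ u v ≤ xi θ u w := by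
    refine le_xi θ ⟨hk1len, ?_⟩
    exact hk1take.trans (take_agree_mono hle hk2take)
  by_cases hz : xi θ u v = 0
  · rw [lcD_of_xi0 θ huv hz]; simp
  have hzk2 : xi θ v w ≠ 0 := by omega
  have hzk3 : xi θ u w ≠ 0 := by omega
  obtain ⟨e0, hE0u, hE0v, hbuv⟩ := xi_pos_getElem θ (u := u) (v := v) hz
  obtain ⟨f0, hF0v, hF0w, hbvw⟩ := xi_pos_getElem θ (u := v) (v := w) hzk2
  obtain ⟨g0, hG0u, hG0w, hbuw⟩ := xi_pos_getElem θ (u := u) (v := w) hzk3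
  have huv_le : lcD θ u v ≤ 2 * height (edgeEnd θ e0) := by
    have := lcD_le_two_base θ huv hz
    rwa [hbuv] at this
  rcases Nat.lt_or_ge (xi θ u v) (xi θ u w) with hk13 | hk13
  · -- xi u w ≥ xi u v + 1 : strict height increase ⇒ lcD u w ≥ 2 h(e0) + 1
    have hk1lt : xi θ u v < (transEdges θ u).length := by omega
    have hEk1 : (transEdges θ u)[xi θ u v]? =
        some ((transEdges θ u)[xi θ u v]'hk1lt) := List.getElem?_eq_getElem hk1lt
    have hstep : height (edgeEnd θ e0) + 1 ≤
        height (edgeEnd θ ((transEdges θ u)[xi θ u v]'hk1lt)) := by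
      refine TE_step θ hgen (t := 1) (w := u.toList) (k := xi θ u v - 1) hE0u ?_
      have h9 : xi θ u v - 1 + 1 = xi θ u v := by omega
      rw [h9]; exact hEk1
    have hmono2 : height (edgeEnd θ ((transEdges θ u)[xi θ u v]'hk1lt)) ≤
        height (edgeEnd θ g0) :=
      TE_mono θ hgen (t := 1) (w := u.toList) (by omega : xi θ u v ≤ xi θ u w - 1) hEk1 hG0u
    have hges := lcD_ge_pred θ huw hzk3
    rw [hbuw] at hges
    have hmm := min_le_left (lcD θ u v) (lcD θ v w)
    omega
  · -- xi u w = xi u v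
    have hk3e : xi θ u w = xi θ u v := by omega
    have hg0 : g0 = e0 := by
      rw [← Option.some_inj, ← hG0u, ← hE0u, hk3e]
    rw [hg0] at hbuw hG0u
    rcases Nat.lt_or_ge (xi θ u v) (xi θ v w) with hlt | hge
    · -- xi u v < xi v w : lcD v w ≥ 2 h(e0) - 1 trivially suffices plus branch analysis
      rw [lcD_eq' θ huw hzk3]
      split_ifs with hcond
      · rw [hbuw]
        exact le_trans (min_le_left _ _) huv_le
      · have huv_else : ¬ ∃ e e', (transEdges θ u)[xi θ u v]? = some e ∧
            (transEdges θ v)[xi θ u v]? = some e' ∧ edgeEnd θ e = edgeEnd θ e' := by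
          rintro ⟨e1, e1', hA, hB, hC⟩
          refine hcond ⟨e1, e1', ?_, ?_, hC⟩
          · rw [hk3e]; exact hA
          · rw [hk3e, ← hB]
            exact (getElem?_eq_of_take_agree (by omega)
              (take_agree_mono (by omega : xi θ u v + 1 ≤ xi θ v w) hk2take)).symm
        have h5 := lcD_else θ huv hz huv_else
        rw [hbuv] at h5
        rw [hbuw]
        have hmm := min_le_left (lcD θ u v) (lcD θ v w)
        omega
    · -- xi u v = xi v w
      have heq : xi θ v w = xi θ u v := by omega
      have hf0 : f0 = e0 := by
        rw [← Option.some_inj, ← hF0v, ← hE0v, heq]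
      rw [hf0] at hbvw
      have hvw_le : lcD θ v w ≤ 2 * height (edgeEnd θ e0) := by
        have := lcD_le_two_base θ hvw hzk2
        rwa [hbvw] at this
      rw [lcD_eq' θ huw hzk3]
      split_ifs with hcond
      · rw [hbuw]
        exact le_trans (min_le_left _ _) huv_le
      · by_cases hthen : ∃ e e', (transEdges θ u)[xi θ u v]? = some e ∧
            (transEdges θ v)[xi θ u v]? = some e' ∧ edgeEnd θ e = edgeEnd θ e'
        · obtain ⟨e1, e1', hA, hB, hC⟩ := hthen
          have hvw_else : ¬ ∃ e e', (transEdges θ v)[xi θ v w]? = some e ∧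
              (transEdges θ w)[xi θ v w]? = some e' ∧ edgeEnd θ e = edgeEnd θ e' := by
            rintro ⟨f1, f1', hA', hB', hC'⟩
            rw [heq] at hA' hB'
            have hf1 : f1 = e1' := by
              rw [← Option.some_inj, ← hA', ← hB]
            subst hf1
            refine hcond ⟨e1, f1', ?_, ?_, ?_⟩
            · rw [hk3e]; exact hA
            · rw [hk3e]; exact hB'
            · rw [hC, hC']
          have h5 := lcD_else θ hvw hzk2 hvw_else
          rw [hbvw] at h5
          rw [hbuw]
          have hmm := min_le_right (lcD θ u v) (lcD θ v w)
          omega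
        · have h5 := lcD_else θ huv hz hthen
          rw [hbuv] at h5
          rw [hbuw]
          have hmm := min_le_left (lcD θ u v) (lcD θ v w)
          omega

theorem lcD_ultra (hgen : ∀ s : S, ∃ u : FreeMonoid A, θ u = (s : WithOne S))
    (u v w : FreeMonoid A) :
    min (lcD θ u v) (lcD θ v w) ≤ lcD θ u w := by
  by_cases huv : KRrel θ u v
  · rw [lcD_congr_left θ huv w]
    exact min_le_right _ _
  by_cases hvw : KRrel θ v w
  · rw [← lcD_congr_right θ hvw (u := u)]
    exact min_le_left _ _
  by_cases huw : KRrel θ u w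
  · rw [lcD_of_rel θ huw]
    exact le_trans (min_le_left _ _) (lcD_le_ell θ u v)
  rcases le_or_gt (xi θ u v) (xi θ v w) with hle | hgt
  · exact lcD_ultra_aux θ hgen huv hvw huw hle
  · have hwv : ¬ KRrel θ w v := fun h => hvw (KRrel_symm θ h)
    have hvu : ¬ KRrel θ v u := fun h => huv (KRrel_symm θ h)
    have hwu : ¬ KRrel θ w u := fun h => huw (KRrel_symm θ h)
    have hle' : xi θ w v ≤ xi θ v u := by
      rw [xi_symm θ w v, xi_symm θ v u]
      omega
    have := lcD_ultra_aux θ hgen hwv hvu hwu hle'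
    rw [lcD_symm θ w v, lcD_symm θ v u, lcD_symm θ w u, min_comm] at this
    exact this

end P6
end KRHolonomy
end Part6
section Part7
namespace KRHolonomy
open FreeMonoid

section P7
variable {A S : Type*} [Semigroup S] [Finite S] (θ : FreeMonoid A →* WithOne S)

theorem theta_ofList_toList (x : FreeMonoid A) : θ (FreeMonoid.ofList x.toList) = θ x := by
  rw [FreeMonoid.ofList_toList]

theorem die_height {s t : WithOne S} {vlx : List A} {e1 : WithOne S × A}
    {rest : List (WithOne S × A)}
    (hfirst : transEdgesFrom θ t vlx = e1 :: rest)
    (hdie : ¬ IsTransitionEdge θ (s * e1.1) e1.2) :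
    height (edgeEnd θ e1) ≤ height (s * t) := by
  obtain ⟨p, prest, hvp, hTp, hsrc, htr⟩ := TE_first θ vlx t e1 rest hfirst
  have hsp : transEdgesFrom θ (s * t) p = [] := by
    rw [TE_mul θ p t s, hTp]; rfl
  obtain ⟨x, hx⟩ := TE_nil_leR θ p (s * t) hsp
  have h1 : leR (s * t) (s * e1.1) := by
    refine ⟨x, ?_⟩
    rw [hsrc, ← mul_assoc]
    exact hx
  have h2 : leR (s * e1.1) (s * t) := ⟨θ (FreeMonoid.ofList p), by rw [hsrc, mul_assoc]⟩
  simp only [IsTransitionEdge, not_not] at hdie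
  obtain ⟨w', hw'⟩ := hdie
  have h3 : leR (s * e1.1) (s * edgeEnd θ e1) := by
    refine ⟨θ w', ?_⟩
    rw [edgeEnd, ← mul_assoc]
    exact hw'.symm
  have h4 : leR (s * edgeEnd θ e1) (s * e1.1) :=
    ⟨θ (FreeMonoid.of e1.2), by rw [edgeEnd, mul_assoc]⟩
  have h5 : height (s * t) = height (s * edgeEnd θ e1) :=
    heq_of_J (leJ_trans (leR_leJ h1) (leR_leJ h3)) (leJ_trans (leR_leJ h4) (leR_leJ h2))
  rw [h5]
  exact height_mono ⟨s, 1, by rw [mul_one]⟩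

theorem lcD_le_mul (hgen : ∀ s : S, ∃ u : FreeMonoid A, θ u = (s : WithOne S))
    (u v w : FreeMonoid A) :
    lcD θ v w ≤ lcD θ (u * v) (u * w) := by
  by_cases hvw : KRrel θ v w
  · rw [lcD_of_rel θ hvw, lcD_of_rel θ (KRrel_mul_left θ hvw u)]
  by_cases hKR2 : KRrel θ (u * v) (u * w)
  · rw [lcD_of_rel θ hKR2]
    exact lcD_le_ell θ v w
  by_cases hz : xi θ v w = 0
  · rw [lcD_of_xi0 θ hvw hz]
    exact Nat.zero_le _
  obtain ⟨hklen, hktake⟩ := xi_mem θ v w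
  obtain ⟨e0, hE0v, hE0w, hbvw⟩ := xi_pos_getElem θ (u := v) (v := w) hz
  obtain ⟨ul, vl, hvsplit, hTul, hTvl⟩ := TE_split θ v.toList 1 (xi θ v w) hklen
  obtain ⟨ul', vl', hwsplit, hTul', hTvl'⟩ := TE_split θ w.toList 1 (xi θ v w)
    (length_le_of_take_agree hklen hktake)
  have hEv : transEdgesFrom θ 1 v.toList = transEdges θ v := rfl
  have hEw : transEdgesFrom θ 1 w.toList = transEdges θ w := rfl
  rw [hEv] at hTul hTvl
  rw [hEw] at hTul' hTvl'
  rw [one_mul] at hTvl hTvl'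
  have hTul'' : transEdgesFrom θ 1 ul' = transEdgesFrom θ 1 ul := by
    rw [hTul, hTul', hktake]
  have hTswap : transEdgesFrom θ (θ u) ul
      = (transEdgesFrom θ 1 ul).filterMap (fS θ (θ u)) := by
    have h := TE_mul θ ul 1 (θ u); rwa [mul_one] at h
  have hTswap' : transEdgesFrom θ (θ u) ul'
      = (transEdgesFrom θ 1 ul).filterMap (fS θ (θ u)) := by
    have h := TE_mul θ ul' 1 (θ u); rw [mul_one] at h
    rw [h, hTul'']
  set W : List (WithOne S × A) :=
    transEdges θ u ++ (transEdgesFrom θ 1 ul).filterMap (fS θ (θ u)) with hW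
  have hWT : transEdgesFrom θ 1 (u.toList ++ ul) = W := by
    rw [TE_append, one_mul, theta_ofList_toList, hTswap, hW]
    rfl
  have hWT' : transEdgesFrom θ 1 (u.toList ++ ul') = W := by
    rw [TE_append, one_mul, theta_ofList_toList, hTswap', hW]
    rfl
  have hW1 : transEdges θ (u * v)
      = W ++ transEdgesFrom θ (θ u * θ (FreeMonoid.ofList ul)) vl := by
    rw [transEdges_mul, hvsplit, TE_append, hTswap, hW, List.append_assoc]
  have hW2 : transEdges θ (u * w)
      = W ++ transEdgesFrom θ (θ u * θ (FreeMonoid.ofList ul')) vl' := by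
    rw [transEdges_mul, hwsplit, TE_append, hTswap', hW, List.append_assoc]
  set M := W.length with hM
  have htakeM : (transEdges θ (u * v)).take M = W := by
    rw [hW1, hM]; exact List.take_left
  have htakeM' : (transEdges θ (u * w)).take M = W := by
    rw [hW2, hM]; exact List.take_left
  have hMxi : M ≤ xi θ (u * v) (u * w) := by
    refine le_xi θ ⟨?_, htakeM.trans htakeM'.symm⟩
    rw [hW1, List.length_append]
    omega
  have hTul_len : (transEdgesFrom θ 1 ul).length = xi θ v w := by
    rw [hTul, List.length_take]
    omega
  have hWne : W ≠ [] := by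
    intro hWnil
    rw [hW] at hWnil
    rcases List.append_eq_nil_iff.1 hWnil with ⟨hEu0, hF0⟩
    obtain ⟨x, hx⟩ := TE_nil_leR θ u.toList 1 hEu0
    rw [one_mul, theta_ofList_toList] at hx
    have hlen := filterMap_fS_of_unit θ (s := θ u) ⟨x, hx.symm⟩ (transEdgesFrom θ 1 ul)
      (fun e he => TE_mem_trans θ ul 1 e he)
    rw [hF0] at hlen
    simp only [List.length_nil] at hlen
    omega
  have hM1 : 1 ≤ M := by
    rw [hM]
    rcases hWl : W with _ | _
    · exact absurd hWl hWne
    · simp [hWl]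
  obtain ⟨r, hr⟩ : ∃ r, W.getLast? = some r :=
    ⟨W.getLast hWne, List.getLast?_eq_getLast hWne⟩
  have hrh : height (edgeEnd θ r) = height (θ u * θ (FreeMonoid.ofList ul)) := by
    have h := TE_last_height θ (w := u.toList ++ ul) (t := 1) (e := r)
      (by rw [hWT]; exact hr)
    rwa [one_mul, thetaL_append, theta_ofList_toList] at h
  have hrh' : height (edgeEnd θ r) = height (θ u * θ (FreeMonoid.ofList ul')) := by
    have h := TE_last_height θ (w := u.toList ++ ul') (t := 1) (e := r)
      (by rw [hWT']; exact hr)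
    rwa [one_mul, thetaL_append, theta_ofList_toList] at h
  have h9 : xi θ v w = (xi θ v w - 1) + 1 := by omega
  have he0h : height (edgeEnd θ e0) = height (θ (FreeMonoid.ofList ul)) := by
    have hlast : (transEdgesFrom θ 1 ul).getLast? = some e0 := by
      rw [hTul, h9]
      exact TE_take_getLast θ hE0v
    have h := TE_last_height θ (w := ul) (t := 1) hlast
    rwa [one_mul] at h
  have he0r : height (edgeEnd θ e0) ≤ height (edgeEnd θ r) := by
    rw [he0h, hrh]
    exact height_mono ⟨θ u, 1, by rw [mul_one]⟩
  have hKz : xi θ (u * v) (u * w) ≠ 0 := by omega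
  obtain ⟨eK, hEKu, hEKw, hbK⟩ := xi_pos_getElem θ (u := u * v) (v := u * w) hKz
  have hEM1 : (transEdges θ (u * v))[M - 1]? = some r := by
    rw [hW1, List.getElem?_append, if_pos (by omega)]
    have hgl := List.getLast?_eq_getElem? (l := W)
    rw [hgl] at hr
    rw [hM]
    exact hr
  have hreK : height (edgeEnd θ r) ≤ height (edgeEnd θ eK) :=
    TE_mono θ hgen (t := 1) (w := (u * v).toList)
      (by omega : M - 1 ≤ xi θ (u * v) (u * w) - 1) hEM1 hEKu
  have hgeK := lcD_ge_pred θ hKR2 hKz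
  rw [hbK] at hgeK
  rw [lcD_eq' θ hvw hz]
  split_ifs with hcond
  · -- then-branch of lcD v w : value 2 * height e0
    rw [hbvw]
    obtain ⟨e1, e1', hA, hB, hend⟩ := hcond
    have hstep : height (edgeEnd θ e0) + 1 ≤ height (edgeEnd θ e1) := by
      refine TE_step θ hgen (t := 1) (w := v.toList) (k := xi θ v w - 1) hE0v ?_
      rw [← h9]
      exact hA
    have hfst : (transEdgesFrom θ (θ (FreeMonoid.ofList ul)) vl)[0]? = some e1 := by
      rw [hTvl, List.getElem?_drop]
      simpa using hA
    rcases hT1 : transEdgesFrom θ (θ (FreeMonoid.ofList ul)) vl with _ | ⟨f1, rest1⟩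
    · rw [hT1] at hfst; simp at hfst
    have hf1 : f1 = e1 := by rw [hT1] at hfst; simpa using hfst
    rw [hf1] at hT1
    have hfst' : (transEdgesFrom θ (θ (FreeMonoid.ofList ul')) vl')[0]? = some e1' := by
      rw [hTvl', List.getElem?_drop]
      simpa using hB
    rcases hT1' : transEdgesFrom θ (θ (FreeMonoid.ofList ul')) vl' with _ | ⟨f1', rest1'⟩
    · rw [hT1'] at hfst'; simp at hfst'
    have hf1' : f1' = e1' := by rw [hT1'] at hfst'; simpa using hfst'
    rw [hf1'] at hT1'
    by_cases hs1 : IsTransitionEdge θ (θ u * e1.1) e1.2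
    · by_cases hs1' : IsTransitionEdge θ (θ u * e1'.1) e1'.2
      · -- both survive
        have hfS1 : fS θ (θ u) e1 = some (θ u * e1.1, e1.2) := by
          unfold fS; rw [if_pos hs1]
        have hfS1' : fS θ (θ u) e1' = some (θ u * e1'.1, e1'.2) := by
          unfold fS; rw [if_pos hs1']
        have hTmul : transEdgesFrom θ (θ u * θ (FreeMonoid.ofList ul)) vl
            = (θ u * e1.1, e1.2) :: rest1.filterMap (fS θ (θ u)) := by
          rw [TE_mul θ vl (θ (FreeMonoid.ofList ul)) (θ u), hT1, List.filterMap_cons, hfS1]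
        have hTmul' : transEdgesFrom θ (θ u * θ (FreeMonoid.ofList ul')) vl'
            = (θ u * e1'.1, e1'.2) :: rest1'.filterMap (fS θ (θ u)) := by
          rw [TE_mul θ vl' (θ (FreeMonoid.ofList ul')) (θ u), hT1', List.filterMap_cons, hfS1']
        have h0 : M - W.length = 0 := by omega
        have hEuvM : (transEdges θ (u * v))[M]? = some (θ u * e1.1, e1.2) := by
          rw [hW1, List.getElem?_append, if_neg (by omega), h0, hTmul]
          simp
        have hEuwM : (transEdges θ (u * w))[M]? = some (θ u * e1'.1, e1'.2) := by
          rw [hW2, List.getElem?_append, if_neg (by omega), h0, hTmul']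
          simp
        have hendeq : edgeEnd θ (θ u * e1.1, e1.2) = edgeEnd θ (θ u * e1'.1, e1'.2) := by
          show θ u * e1.1 * θ (FreeMonoid.of e1.2) = θ u * e1'.1 * θ (FreeMonoid.of e1'.2)
          rw [mul_assoc, mul_assoc,
            show e1.1 * θ (FreeMonoid.of e1.2) = edgeEnd θ e1 from rfl,
            show e1'.1 * θ (FreeMonoid.of e1'.2) = edgeEnd θ e1' from rfl, hend]
        by_cases hsE : ((θ u * e1.1, e1.2) : WithOne S × A) = (θ u * e1'.1, e1'.2)
        · have hlenM : M < (transEdges θ (u * v)).length := (List.getElem?_eq_some_iff.1 hEuvM).fst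
          have hK1 : M + 1 ≤ xi θ (u * v) (u * w) := by
            refine le_xi θ ⟨by omega, ?_⟩
            rw [List.take_succ, List.take_succ, htakeM, htakeM', hEuvM, hEuwM, hsE]
          have hmono2 : height (edgeEnd θ (θ u * e1.1, e1.2)) ≤ height (edgeEnd θ eK) :=
            TE_mono θ hgen (t := 1) (w := (u * v).toList)
              (by omega : M ≤ xi θ (u * v) (u * w) - 1) hEuvM hEKu
          have htt : height (edgeEnd θ e1) ≤ height (edgeEnd θ (θ u * e1.1, e1.2)) := by
            show height (edgeEnd θ e1) ≤ height (θ u * e1.1 * θ (FreeMonoid.of e1.2))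
            rw [mul_assoc, show e1.1 * θ (FreeMonoid.of e1.2) = edgeEnd θ e1 from rfl]
            exact height_mono ⟨θ u, 1, by rw [mul_one]⟩
          omega
        · have hKeM : xi θ (u * v) (u * w) = M := by
            refine le_antisymm ?_ hMxi
            by_contra hcon
            push_neg at hcon
            obtain ⟨hKlen2, hKtake2⟩ := xi_mem θ (u * v) (u * w)
            have hEq := getElem?_eq_of_take_agree
              (show M < xi θ (u * v) (u * w) by omega) hKtake2
            rw [hEuvM, hEuwM] at hEq
            exact hsE (Option.some_inj.1 hEq)
          have hthen := lcD_then θ hKR2 hKz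
            ⟨_, _, by rw [hKeM]; exact hEuvM, by rw [hKeM]; exact hEuwM, hendeq⟩
          rw [hthen, hbK]
          have heKr : eK = r := by
            have hh : (transEdges θ (u * v))[xi θ (u * v) (u * w) - 1]? = some r := by
              rw [hKeM]; exact hEM1
            rw [hh] at hEKu
            exact (Option.some_inj.1 hEKu).symm
          rw [heKr]
          omega
      · -- e1' dies
        have hd := die_height θ (s := θ u) hT1' hs1'
        rw [← hend] at hd
        rw [← hrh'] at hd
        omega
    · -- e1 dies
      have hd := die_height θ (s := θ u) hT1 hs1
      rw [← hrh] at hd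
      omega
  · -- else-branch of lcD v w : value 2 * height e0 - 1
    rw [hbvw]
    omega

end P7
end KRHolonomy
end Part7
open KRHolonomy in
/-- **Holonomy Theorem, left action.** There is a map `ε` sending
`α ∈ T¹ = KR_right(S,A)¹` to the map `ε_α` on the vertices of the Chiswell tree `𝒞` with
`ε_α([k,β]) = [k,αβ]`; it is well defined (independent of representatives, both of the pair
`(k,β)` and of `α`), each `ε_α` is an elliptic map of `(𝒞,[0,1])` (it preserves the depth of
every vertex and maps edges to edges), `ε` is a monoid homomorphism (`ε_{αα'} = ε_α ∘ ε_{α'}`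
and `ε_1 = id`), and `ε` is injective.  Hence `KR¹_right(S,A)` is faithfully represented as
elliptic maps on a finite rooted tree. -/
theorem holonomy_left_action {A S : Type*} [Finite A] [Semigroup S] [Finite S]
    (θ : FreeMonoid A →* WithOne S)
    (hgen : ∀ s : S, ∃ u : FreeMonoid A, θ u = (s : WithOne S))
    (hproper : ∀ u : FreeMonoid A, θ u = 1 → u = 1) :
    ∃ ε : FreeMonoid A → CVert θ → CVert θ,
      (∀ (α β : FreeMonoid A) (k : ℕ) (hk : k ≤ ell S),
          ε α (Quot.mk (simRel θ) ⟨(k, β), hk⟩) = Quot.mk (simRel θ) ⟨(k, α * β), hk⟩) ∧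
      (∀ α α' : FreeMonoid A, KRrel θ α α' → ε α = ε α') ∧
      (∀ (α : FreeMonoid A) (v : CVert θ), depth θ (ε α v) = depth θ v) ∧
      (∀ (α : FreeMonoid A) (v w : CVert θ),
          (CGraph θ).Adj v w → (CGraph θ).Adj (ε α v) (ε α w)) ∧
      (∀ α α' : FreeMonoid A, ε (α * α') = ε α ∘ ε α') ∧
      ε 1 = id ∧
      (∀ α α' : FreeMonoid A, ε α = ε α' → KRrel θ α α') := by
  classical
  have hwd : ∀ (α : FreeMonoid A) (p q : {p : ℕ × FreeMonoid A // p.1 ≤ ell S}),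
      simRel θ p q →
      Quot.mk (simRel θ) (⟨(p.val.1, α * p.val.2), p.2⟩ :
        {p : ℕ × FreeMonoid A // p.1 ≤ ell S}) =
      Quot.mk (simRel θ) ⟨(q.val.1, α * q.val.2), q.2⟩ := by
    rintro α ⟨⟨k, β⟩, hk⟩ ⟨⟨k', β'⟩, hk'⟩ ⟨h1, h2⟩
    simp only at h1 h2
    subst h1
    apply Quot.sound
    exact ⟨rfl, le_trans h2 (lcD_le_mul θ hgen α β β')⟩
  refine ⟨fun α => Quot.lift
      (fun p => Quot.mk (simRel θ) ⟨(p.val.1, α * p.val.2), p.2⟩) (hwd α),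
    ?_, ?_, ?_, ?_, ?_, ?_, ?_⟩
  · intro α β k hk
    rfl
  · intro α α' hrel
    funext x
    induction x using Quot.ind with
    | _ p =>
      obtain ⟨⟨k, β⟩, hk⟩ := p
      apply Quot.sound
      refine ⟨rfl, ?_⟩
      show (k : ℕ) ≤ lcD θ (α * β) (α' * β)
      rw [lcD_of_rel θ (KRrel_mul_right θ hrel β)]
      exact hk
  · intro α x
    induction x using Quot.ind with
    | _ p => rfl
  · intro α x y hadj
    rw [CGraph, SimpleGraph.fromRel_adj] at hadj ⊢
    obtain ⟨hne, hor⟩ := hadj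
    have hdepth : ∀ z : CVert θ,
        depth θ (Quot.lift
          (fun p => Quot.mk (simRel θ) ⟨(p.val.1, α * p.val.2), p.2⟩) (hwd α) z)
          = depth θ z := by
      intro z
      induction z using Quot.ind with
      | _ p => rfl
    rcases hor with hr | hr
    · obtain ⟨k, γ, hkk, hx, hy⟩ := hr
      constructor
      · intro heq
        have hd := congrArg (depth θ) heq
        rw [hdepth, hdepth, hx, hy] at hd
        simp [depth] at hd
      · left
        refine ⟨k, α * γ, hkk, ?_, ?_⟩
        · rw [hx]
        · rw [hy]
    · obtain ⟨k, γ, hkk, hy, hx⟩ := hr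
      constructor
      · intro heq
        have hd := congrArg (depth θ) heq
        rw [hdepth, hdepth, hx, hy] at hd
        simp [depth] at hd
      · right
        refine ⟨k, α * γ, hkk, ?_, ?_⟩
        · rw [hy]
        · rw [hx]
  · intro α α'
    funext x
    induction x using Quot.ind with
    | _ p =>
      obtain ⟨⟨k, β⟩, hk⟩ := p
      show Quot.mk _ _ = Quot.mk _ _
      exact congrArg (Quot.mk (simRel θ))
        (Subtype.ext (Prod.ext rfl (mul_assoc α α' β)))
  · funext x
    induction x using Quot.ind with
    | _ p =>
      obtain ⟨⟨k, β⟩, hk⟩ := p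
      show Quot.mk _ _ = Quot.mk _ _
      exact congrArg (Quot.mk (simRel θ))
        (Subtype.ext (Prod.ext rfl (one_mul β)))
  · intro α α' h
    by_contra hne
    have heqv : Equivalence (simRel θ) := by
      constructor
      · rintro ⟨⟨k, β⟩, hk⟩
        refine ⟨rfl, ?_⟩
        show (k : ℕ) ≤ lcD θ β β
        rw [lcD_of_rel θ (KRrel_refl θ β)]
        exact hk
      · rintro ⟨⟨k, β⟩, hk⟩ ⟨⟨k', β'⟩, hk'⟩ ⟨h1, h2⟩
        simp only at h1 h2
        subst h1
        refine ⟨rfl, ?_⟩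
        show (k : ℕ) ≤ lcD θ β' β
        rw [lcD_symm θ β' β]
        exact h2
      · rintro ⟨⟨k, β⟩, hk⟩ ⟨⟨k', β'⟩, hk'⟩ ⟨⟨k'', β''⟩, hk''⟩ ⟨h1, h2⟩ ⟨h3, h4⟩
        simp only at h1 h2 h3 h4
        subst h1; subst h3
        refine ⟨rfl, ?_⟩
        show (k : ℕ) ≤ lcD θ β β''
        have hu := lcD_ultra θ hgen β β' β''
        omega
    have hx := congrFun h (Quot.mk (simRel θ) ⟨(ell S, 1), le_refl _⟩)
    have hrel := (heqv.eqvGen_iff).1 (Quot.eqvGen_exact hx)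
    obtain ⟨-, h2⟩ := hrel
    simp only at h2
    rw [mul_one, mul_one] at h2
    have := lcD_lt_ell θ hproper hgen hne
    omega
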